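/- arXiv:2310.00398 — 2 statements merged into one kernel-verified Lean document; each statement's English description precedes it below -/
import Mathlib

section
/- Let a, b > 0 and c ∈ (0, π/2], and define g(ψ) = a·sin²ψ + b·sin²(c − ψ). Then with γ = a + b·cos(2c), δ = b·sin(2c), and Ω = arctan(δ/γ) (assuming γ > 0), the point ψ* = Ω/2 lies in [0, c] and is a global minimizer of g on [0, c]. -/
open Real

theorem stmt3 (a b c : ℝ) (ha : 0 < a) (hb : 0 < b) (hc : c ∈ Set.Ioc 0 (π / 2))
    (γ δ Ω : ℝ) (hγ : γ = a + b * Real.cos (2 * c)) (hδ : δ = b * Real.sin (2 * c))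
    (hγpos : 0 < γ) (hΩ : Ω = Real.arctan (δ / γ)) :
    Ω / 2 ∈ Set.Icc 0 c ∧
      ∀ ψ ∈ Set.Icc 0 c,
        a * Real.sin (Ω / 2) ^ 2 + b * Real.sin (c - Ω / 2) ^ 2 ≤
          a * Real.sin ψ ^ 2 + b * Real.sin (c - ψ) ^ 2 := by
  obtain ⟨hc0, hc2⟩ := hc
  have hδ0 : 0 ≤ δ := by
    rw [hδ]
    exact mul_nonneg hb.le
      (Real.sin_nonneg_of_nonneg_of_le_pi (by linarith) (by linarith))
  set R := Real.sqrt (γ ^ 2 + δ ^ 2) with hR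
  have hRpos : 0 < R := Real.sqrt_pos.2 (by positivity)
  have hR2 : R ^ 2 = γ ^ 2 + δ ^ 2 := Real.sq_sqrt (by positivity)
  have h1 : Real.sqrt (1 + (δ / γ) ^ 2) = R / γ := by
    rw [eq_div_iff hγpos.ne', ← Real.sqrt_sq hγpos.le,
      ← Real.sqrt_mul (by positivity)]
    congr 1
    field_simp
    rw [Real.sq_sqrt (sq_nonneg γ)]
  have hcosΩ : Real.cos Ω = γ / R := by
    rw [hΩ, Real.cos_arctan, h1]
    field_simp
  have hsinΩ : Real.sin Ω = δ / R := by
    rw [hΩ, Real.sin_arctan, h1]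
    field_simp
  have hΩ0 : 0 ≤ Ω := by
    rw [hΩ, ← Real.arctan_zero]
    exact Real.arctan_strictMono.monotone (div_nonneg hδ0 hγpos.le)
  have hΩle : Ω ≤ 2 * c := by
    rcases le_or_gt (π / 2) (2 * c) with h | h
    · have := Real.arctan_lt_pi_div_two (δ / γ)
      rw [hΩ]; linarith
    · have hcos2c : 0 < Real.cos (2 * c) :=
        Real.cos_pos_of_mem_Ioo ⟨by linarith, h⟩
      have hsin2c : 0 ≤ Real.sin (2 * c) :=
        Real.sin_nonneg_of_nonneg_of_le_pi (by linarith) (by linarith)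
      have htan : δ / γ ≤ Real.tan (2 * c) := by
        rw [Real.tan_eq_sin_div_cos, div_le_div_iff₀ hγpos hcos2c, hδ, hγ]
        nlinarith [mul_nonneg ha.le hsin2c]
      calc Ω = Real.arctan (δ / γ) := hΩ
        _ ≤ Real.arctan (Real.tan (2 * c)) :=
            Real.arctan_strictMono.monotone htan
        _ = 2 * c := Real.arctan_tan (by linarith) h
  have key : ∀ x : ℝ, a * Real.sin x ^ 2 + b * Real.sin (c - x) ^ 2
      = (a + b) / 2 - (γ * Real.cos (2 * x) + δ * Real.sin (2 * x)) / 2 := by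
    intro x
    rw [hγ, hδ]
    have h2 := Real.sin_sq_eq_half_sub x
    have h3 := Real.sin_sq_eq_half_sub (c - x)
    have h4 : 2 * (c - x) = 2 * c - 2 * x := by ring
    rw [h2, h3, h4, Real.cos_sub]
    ring
  have hkeyΩ : a * Real.sin (Ω / 2) ^ 2 + b * Real.sin (c - Ω / 2) ^ 2
      = (a + b) / 2 - R / 2 := by
    rw [key (Ω / 2)]
    have h5 : 2 * (Ω / 2) = Ω := by ring
    rw [h5, hcosΩ, hsinΩ]
    have : γ * (γ / R) + δ * (δ / R) = R := by
      field_simp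
      nlinarith [hR2]
    rw [this]
  refine ⟨⟨by linarith, by linarith⟩, fun ψ _ => ?_⟩
  rw [hkeyΩ, key ψ]
  have hbound : γ * Real.cos (2 * ψ) + δ * Real.sin (2 * ψ) ≤ R := by
    nlinarith [Real.sin_sq_add_cos_sq (2 * ψ), hR2, hRpos,
      sq_nonneg (γ * Real.sin (2 * ψ) - δ * Real.cos (2 * ψ)),
      sq_nonneg (R - (γ * Real.cos (2 * ψ) + δ * Real.sin (2 * ψ)))]
  linarith
end

section
/- Let α, β ∈ ℝ² be nonzero with angle φ strictly greater than θ ∈ (0, π) between them. Then the Euclidean projection of (α, β) (in ℝ⁴ with product norm) onto the set C₃ = {(a, b) : ∠(a, b) = θ} coincides with its projection onto C_narr = {(a, b) : ∠(a, b) ≤ θ}: every closest point of C_narr to (α, β) lies on the boundary ∠(a,b) = θ. -/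
open InnerProductGeometry Real Filter Set
open scoped RealInnerProductSpace Topology

noncomputable def perp2 (a : EuclideanSpace ℝ (Fin 2)) : EuclideanSpace ℝ (Fin 2) :=
  (EuclideanSpace.equiv (Fin 2) ℝ).symm ![-a 1, a 0]

lemma perp2_inner (a : EuclideanSpace ℝ (Fin 2)) : ⟪perp2 a, a⟫ = 0 := by
  simp [perp2, PiLp.inner_apply, Fin.sum_univ_two, EuclideanSpace.equiv]
  ring

lemma perp2_ne_zero {a : EuclideanSpace ℝ (Fin 2)} (ha : a ≠ 0) : perp2 a ≠ 0 := by
  intro h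
  apply ha
  have h0 := congrFun (congrArg (WithLp.equiv 2 (Fin 2 → ℝ)) h) 0
  have h1 := congrFun (congrArg (WithLp.equiv 2 (Fin 2 → ℝ)) h) 1
  simp [perp2, EuclideanSpace.equiv] at h0 h1
  ext i
  fin_cases i <;> simp [h0, h1]

variable {E : Type*} [NormedAddCommGroup E] [InnerProductSpace ℝ E]

lemma pathsafe {a v x : E} (ha : a ≠ 0) (hva : ⟪v, a⟫ = 0) (hvx : ⟪v, x⟫ ≠ 0) :
    ∀ t ∈ Set.Icc (0:ℝ) 1, (1 - t) • x + t • a ≠ 0 := by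
  rintro t ⟨ht0, ht1⟩ h
  have h2 : ⟪v, (1 - t) • x + t • a⟫ = 0 := by rw [h, inner_zero_right]
  rw [inner_add_right, real_inner_smul_right, real_inner_smul_right, hva] at h2
  have ht : t = 1 := by
    rcases mul_eq_zero.1 (by linarith : (1 - t) * ⟪v, x⟫ = 0) with h' | h'
    · linarith
    · exact absurd h' hvx
  rw [ht] at h
  simp at h
  exact ha h

lemma pick {v : E} (hv : v ≠ 0) (x : E) {σ : ℝ} (hσ : 0 < σ) :
    ∃ d : ℝ, |d| < σ ∧ ⟪v, x + d • v⟫ ≠ 0 := by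
  have hv2 : 0 < ⟪v, v⟫ := by
    rw [real_inner_self_eq_norm_sq]; exact pow_pos (norm_pos_iff.2 hv) 2
  by_cases h : ⟪v, x⟫ = 0
  · refine ⟨σ/2, by rw [abs_of_pos (by linarith)]; linarith, ?_⟩
    rw [inner_add_right, real_inner_smul_right, h]
    positivity
  · exact ⟨0, by simpa using hσ, by simpa using h⟩

lemma seg_norm (x a : E) {t : ℝ} (ht : t ≤ 1) :
    ‖((1 - t) • x + t • a) - a‖ = (1 - t) * ‖x - a‖ := by
  have : ((1 - t) • x + t • a) - a = (1 - t) • (x - a) := by module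
  rw [this, norm_smul, Real.norm_eq_abs, abs_of_nonneg (by linarith)]

lemma getball (α β : E) {x y : E} (hx : x ≠ 0) (hy : y ≠ 0) {θ ε : ℝ}
    (hlt : angle x y < θ) (hε : 0 < ε) :
    ∃ ρ > 0, ∀ z : E × E, dist z (x, y) < ρ →
      z.1 ≠ 0 ∧ z.2 ≠ 0 ∧ angle z.1 z.2 < θ ∧
        ‖z.1 - α‖ ^ 2 + ‖z.2 - β‖ ^ 2 < ‖x - α‖ ^ 2 + ‖y - β‖ ^ 2 + ε := by
  have h1 : ∀ᶠ z : E × E in 𝓝 (x, y), z.1 ≠ 0 := continuousAt_fst.eventually_ne hx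
  have h2 : ∀ᶠ z : E × E in 𝓝 (x, y), z.2 ≠ 0 := continuousAt_snd.eventually_ne hy
  have h3 : ∀ᶠ z : E × E in 𝓝 (x, y), angle z.1 z.2 < θ :=
    (continuousAt_angle hx hy).eventually_lt_const hlt
  have hc : ContinuousAt (fun z : E × E => ‖z.1 - α‖ ^ 2 + ‖z.2 - β‖ ^ 2) (x, y) := by
    fun_prop
  have h4 : ∀ᶠ z : E × E in 𝓝 (x, y),
      ‖z.1 - α‖ ^ 2 + ‖z.2 - β‖ ^ 2 < ‖x - α‖ ^ 2 + ‖y - β‖ ^ 2 + ε :=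
    hc.eventually_lt_const (by simp; linarith)
  have := ((h1.and (h2.and (h3.and h4))))
  rw [Metric.eventually_nhds_iff] at this
  obtain ⟨ρ, hρ, h⟩ := this
  exact ⟨ρ, hρ, fun z hz => h hz⟩

set_option maxHeartbeats 1000000 in
lemma key {α β : EuclideanSpace ℝ (Fin 2)} (hα : α ≠ 0) (hβ : β ≠ 0) {θ : ℝ}
    (hφ : θ < angle α β) {x y : EuclideanSpace ℝ (Fin 2)} (hx : x ≠ 0) (hy : y ≠ 0)
    (hlt : angle x y < θ) {ε : ℝ} (hε : 0 < ε) :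
    ∃ z : EuclideanSpace ℝ (Fin 2) × EuclideanSpace ℝ (Fin 2),
      z.1 ≠ 0 ∧ z.2 ≠ 0 ∧ angle z.1 z.2 = θ ∧
        ‖z.1 - α‖ ^ 2 + ‖z.2 - β‖ ^ 2 ≤ ‖x - α‖ ^ 2 + ‖y - β‖ ^ 2 + ε := by
  obtain ⟨ρ, hρ, hball⟩ := getball α β hx hy hlt hε
  have hv := perp2_ne_zero hα
  have hw := perp2_ne_zero hβ
  have hσ1 : 0 < ρ / (‖perp2 α‖ + 1) := by positivity
  have hσ2 : 0 < ρ / (‖perp2 β‖ + 1) := by positivity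
  obtain ⟨d₁, hd₁, hin₁⟩ := pick hv x hσ1
  obtain ⟨d₂, hd₂, hin₂⟩ := pick hw y hσ2
  set x' := x + d₁ • perp2 α with hx'def
  set y' := y + d₂ • perp2 β with hy'def
  have hdist : dist ((x', y') : _ × _) (x, y) < ρ := by
    rw [Prod.dist_eq]
    have e1 : dist x' x = |d₁| * ‖perp2 α‖ := by
      rw [dist_eq_norm, hx'def, add_sub_cancel_left, norm_smul, Real.norm_eq_abs]
    have e2 : dist y' y = |d₂| * ‖perp2 β‖ := by
      rw [dist_eq_norm, hy'def, add_sub_cancel_left, norm_smul, Real.norm_eq_abs]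
    have n1 : (0:ℝ) ≤ ‖perp2 α‖ := norm_nonneg _
    have n2 : (0:ℝ) ≤ ‖perp2 β‖ := norm_nonneg _
    have b1 : |d₁| * ‖perp2 α‖ < ρ := by
      nlinarith [abs_nonneg d₁, (lt_div_iff₀ (by linarith : (0:ℝ) < ‖perp2 α‖ + 1)).1 hd₁]
    have b2 : |d₂| * ‖perp2 β‖ < ρ := by
      nlinarith [abs_nonneg d₂, (lt_div_iff₀ (by linarith : (0:ℝ) < ‖perp2 β‖ + 1)).1 hd₂]
    simp only [e1, e2]
    exact max_lt b1 b2
  obtain ⟨hx', hy', hangle', hD'⟩ := hball (x', y') hdist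
  have hp1 := pathsafe hα (perp2_inner α) hin₁
  have hp2 := pathsafe hβ (perp2_inner β) hin₂
  set g : ℝ → ℝ := fun t => angle ((1 - t) • x' + t • α) ((1 - t) • y' + t • β) with hg
  have hgc : ContinuousOn g (Icc 0 1) := by
    intro t ht
    apply ContinuousAt.continuousWithinAt
    have ca : Continuous (fun t : ℝ => (1 - t) • x' + t • α) :=
      ((continuous_const.sub continuous_id).smul continuous_const).add
        (continuous_id.smul continuous_const)
    have cb : Continuous (fun t : ℝ => (1 - t) • y' + t • β) :=
      ((continuous_const.sub continuous_id).smul continuous_const).add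
        (continuous_id.smul continuous_const)
    have c1 : Continuous (fun t : ℝ =>
        (((1 - t) • x' + t • α, (1 - t) • y' + t • β) :
          EuclideanSpace ℝ (Fin 2) × EuclideanSpace ℝ (Fin 2))) := ca.prodMk cb
    show ContinuousAt ((fun z : EuclideanSpace ℝ (Fin 2) × EuclideanSpace ℝ (Fin 2) =>
        angle z.1 z.2) ∘ (fun t : ℝ =>
        ((1 - t) • x' + t • α, (1 - t) • y' + t • β))) t
    exact ContinuousAt.comp (continuousAt_angle (hp1 t ht) (hp2 t ht)) c1.continuousAt
  have g0 : g 0 = angle x' y' := by simp [hg]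
  have g1 : g 1 = angle α β := by simp [hg]
  have hmem : θ ∈ Icc (g 0) (g 1) := by
    rw [g0, g1]; exact ⟨le_of_lt hangle', le_of_lt hφ⟩
  obtain ⟨t, htI, hgt⟩ := intermediate_value_Icc zero_le_one hgc hmem
  refine ⟨((1 - t) • x' + t • α, (1 - t) • y' + t • β), hp1 t htI, hp2 t htI, hgt, ?_⟩
  have e1 : ‖((1 - t) • x' + t • α) - α‖ = (1 - t) * ‖x' - α‖ := seg_norm x' α htI.2
  have e2 : ‖((1 - t) • y' + t • β) - β‖ = (1 - t) * ‖y' - β‖ := seg_norm y' β htI.2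
  simp only [e1, e2]
  have h01 : (0:ℝ) ≤ 1 - t := by linarith [htI.2]
  have h01' : (1 - t) ≤ 1 := by linarith [htI.1]
  have hD'' : ‖x' - α‖ ^ 2 + ‖y' - β‖ ^ 2 < ‖x - α‖ ^ 2 + ‖y - β‖ ^ 2 + ε := hD'
  nlinarith [hD'', mul_nonneg (mul_nonneg (by linarith [htI.1] : (0:ℝ) ≤ t)
    (by linarith : (0:ℝ) ≤ 2 - t))
    (add_nonneg (sq_nonneg ‖x' - α‖) (sq_nonneg ‖y' - β‖))]

lemma strict1 {E : Type*} [NormedAddCommGroup E] [InnerProductSpace ℝ E]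
    {α β : E} {θ : ℝ} (hφ : θ < angle α β) {x y : E} (hx : x ≠ 0) (hy : y ≠ 0)
    (hlt : angle x y < θ)
    (hgb : ∃ ρ > 0, ∀ z : E × E, dist z (x, y) < ρ →
      z.1 ≠ 0 ∧ z.2 ≠ 0 ∧ angle z.1 z.2 < θ ∧
        ‖z.1 - α‖ ^ 2 + ‖z.2 - β‖ ^ 2 < ‖x - α‖ ^ 2 + ‖y - β‖ ^ 2 + 1) :
    ∃ z : E × E, z.1 ≠ 0 ∧ z.2 ≠ 0 ∧ angle z.1 z.2 ≤ θ ∧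
      ‖z.1 - α‖ ^ 2 + ‖z.2 - β‖ ^ 2 < ‖x - α‖ ^ 2 + ‖y - β‖ ^ 2 := by
  obtain ⟨ρ, hρ, hball⟩ := hgb
  have hD0 : 0 < ‖x - α‖ ^ 2 + ‖y - β‖ ^ 2 := by
    rcases (lt_or_eq_of_le (by positivity : (0:ℝ) ≤ ‖x - α‖ ^ 2 + ‖y - β‖ ^ 2)) with h | h
    · exact h
    · exfalso
      have s1 : (0:ℝ) ≤ ‖x - α‖ ^ 2 := sq_nonneg _
      have s2 : (0:ℝ) ≤ ‖y - β‖ ^ 2 := sq_nonneg _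
      have h1 : ‖x - α‖ ^ 2 = 0 := by linarith
      have h2 : ‖y - β‖ ^ 2 = 0 := by linarith
      have hxα : x = α := sub_eq_zero.1 (norm_eq_zero.1 (by
        have := pow_eq_zero_iff (n := 2) (by norm_num) |>.1 h1
        exact this))
      have hyβ : y = β := sub_eq_zero.1 (norm_eq_zero.1 (by
        have := pow_eq_zero_iff (n := 2) (by norm_num) |>.1 h2
        exact this))
      rw [hxα, hyβ] at hlt; linarith
  set M : ℝ := max ‖α - x‖ ‖β - y‖ with hM
  have hM0 : 0 ≤ M := le_trans (norm_nonneg _) (le_max_left _ _)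
  set t : ℝ := min (ρ / (2 * (M + 1))) (1 / 2) with ht
  have ht0 : 0 < t := lt_min (by positivity) (by norm_num)
  have ht1 : t ≤ 1 / 2 := min_le_right _ _
  have htρ : t * (M + 1) ≤ ρ / 2 := by
    have := min_le_left (ρ / (2 * (M + 1))) (1 / 2)
    calc t * (M + 1) ≤ (ρ / (2 * (M + 1))) * (M + 1) := by
          apply mul_le_mul_of_nonneg_right this (by linarith)
      _ = ρ / 2 := by field_simp
  refine ⟨((1 - t) • x + t • α, (1 - t) • y + t • β), ?_⟩
  have hdist : dist (((1 - t) • x + t • α, (1 - t) • y + t • β) : E × E) (x, y) < ρ := by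
    rw [Prod.dist_eq]
    have e1 : (1 - t) • x + t • α - x = t • (α - x) := by module
    have e2 : (1 - t) • y + t • β - y = t • (β - y) := by module
    have d1 : dist ((1 - t) • x + t • α) x = t * ‖α - x‖ := by
      rw [dist_eq_norm, e1, norm_smul, Real.norm_eq_abs, abs_of_pos ht0]
    have d2 : dist ((1 - t) • y + t • β) y = t * ‖β - y‖ := by
      rw [dist_eq_norm, e2, norm_smul, Real.norm_eq_abs, abs_of_pos ht0]
    rw [d1, d2]
    apply max_lt
    · have : t * ‖α - x‖ ≤ t * (M + 1) := by
        apply mul_le_mul_of_nonneg_left _ (le_of_lt ht0)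
        have := le_max_left ‖α - x‖ ‖β - y‖; rw [← hM] at this; linarith
      linarith
    · have : t * ‖β - y‖ ≤ t * (M + 1) := by
        apply mul_le_mul_of_nonneg_left _ (le_of_lt ht0)
        have := le_max_right ‖α - x‖ ‖β - y‖; rw [← hM] at this; linarith
      linarith
  obtain ⟨h1, h2, h3, _⟩ := hball _ hdist
  refine ⟨h1, h2, le_of_lt h3, ?_⟩
  have e1 : ‖((1 - t) • x + t • α) - α‖ = (1 - t) * ‖x - α‖ := by
    have : ((1 - t) • x + t • α) - α = (1 - t) • (x - α) := by module
    rw [this, norm_smul, Real.norm_eq_abs, abs_of_nonneg (by linarith)]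
  have e2 : ‖((1 - t) • y + t • β) - β‖ = (1 - t) * ‖y - β‖ := by
    have : ((1 - t) • y + t • β) - β = (1 - t) • (y - β) := by module
    rw [this, norm_smul, Real.norm_eq_abs, abs_of_nonneg (by linarith)]
  simp only [e1, e2]
  have hq : (1 - t) ^ 2 ≤ 1 - t := by nlinarith
  have hA : (0:ℝ) ≤ ‖x - α‖ ^ 2 + ‖y - β‖ ^ 2 := le_of_lt hD0
  have h5 : ((1 - t) * ‖x - α‖) ^ 2 + ((1 - t) * ‖y - β‖) ^ 2
      = (1 - t) ^ 2 * (‖x - α‖ ^ 2 + ‖y - β‖ ^ 2) := by ring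
  rw [h5]
  have h6 : (1 - t) ^ 2 * (‖x - α‖ ^ 2 + ‖y - β‖ ^ 2)
      ≤ (1 - t) * (‖x - α‖ ^ 2 + ‖y - β‖ ^ 2) := mul_le_mul_of_nonneg_right hq hA
  nlinarith [mul_pos ht0 hD0]

theorem stmt16 (α β : EuclideanSpace ℝ (Fin 2)) (hα : α ≠ 0) (hβ : β ≠ 0)
    (θ : ℝ) (hθ : θ ∈ Set.Ioo 0 π) (hφ : θ < InnerProductGeometry.angle α β)
    (D : EuclideanSpace ℝ (Fin 2) × EuclideanSpace ℝ (Fin 2) → ℝ)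
    (hD : D = fun p => ‖p.1 - α‖ ^ 2 + ‖p.2 - β‖ ^ 2)
    (Cnarr C3 : Set (EuclideanSpace ℝ (Fin 2) × EuclideanSpace ℝ (Fin 2)))
    (hCnarr : Cnarr = {p | p.1 ≠ 0 ∧ p.2 ≠ 0 ∧ InnerProductGeometry.angle p.1 p.2 ≤ θ})
    (hC3 : C3 = {p | p.1 ≠ 0 ∧ p.2 ≠ 0 ∧ InnerProductGeometry.angle p.1 p.2 = θ}) :
    (∀ p ∈ Cnarr, (∀ q ∈ Cnarr, D p ≤ D q) → InnerProductGeometry.angle p.1 p.2 = θ) ∧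
      {p ∈ C3 | ∀ q ∈ C3, D p ≤ D q} = {p ∈ Cnarr | ∀ q ∈ Cnarr, D p ≤ D q} := by
  subst hD hCnarr hC3
  have part1 : ∀ p ∈ {p : EuclideanSpace ℝ (Fin 2) × EuclideanSpace ℝ (Fin 2) |
      p.1 ≠ 0 ∧ p.2 ≠ 0 ∧ angle p.1 p.2 ≤ θ},
      (∀ q ∈ {p : EuclideanSpace ℝ (Fin 2) × EuclideanSpace ℝ (Fin 2) |
        p.1 ≠ 0 ∧ p.2 ≠ 0 ∧ angle p.1 p.2 ≤ θ},
        ‖p.1 - α‖ ^ 2 + ‖p.2 - β‖ ^ 2 ≤ ‖q.1 - α‖ ^ 2 + ‖q.2 - β‖ ^ 2) →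
      angle p.1 p.2 = θ := by
    rintro p ⟨hp1, hp2, hp3⟩ hmin
    by_contra hne
    have hlt : angle p.1 p.2 < θ := lt_of_le_of_ne hp3 hne
    obtain ⟨z, hz1, hz2, hz3, hz4⟩ :=
      strict1 hφ hp1 hp2 hlt (getball α β hp1 hp2 hlt one_pos)
    have := hmin z ⟨hz1, hz2, hz3⟩
    linarith
  refine ⟨part1, ?_⟩
  ext p
  simp only [Set.mem_setOf_eq, Set.mem_sep_iff]
  constructor
  · rintro ⟨⟨hp1, hp2, hp3⟩, hmin⟩
    refine ⟨⟨hp1, hp2, le_of_eq hp3⟩, ?_⟩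
    rintro q ⟨hq1, hq2, hq3⟩
    rcases eq_or_lt_of_le hq3 with heq | hlt
    · exact hmin q ⟨hq1, hq2, heq⟩
    · apply le_of_forall_pos_le_add
      intro ε hε
      obtain ⟨z, hz1, hz2, hz3, hz4⟩ := key hα hβ hφ hq1 hq2 hlt hε
      have := hmin z ⟨hz1, hz2, hz3⟩
      -- combine
      linarith
  · rintro ⟨hpn, hmin⟩
    have hθeq : angle p.1 p.2 = θ := part1 p hpn hmin
    refine ⟨⟨hpn.1, hpn.2.1, hθeq⟩, ?_⟩
    rintro q ⟨hq1, hq2, hq3⟩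
    exact hmin q ⟨hq1, hq2, le_of_eq hq3⟩
end
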